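/- For each fixed x ∈ X the following two properties are equivalent: (i) there is a constant C > 0 such that p(t,x,x) ≤ C·N(x,1/t) for all t > 0; (ii) N(x,·) is doubling, i.e. there is a constant D such that N(x,2τ) ≤ D·N(x,τ) for all τ > 0. -/

import Mathlib

open MeasureTheory Metric Filter
open scoped ENNReal Classical

/-- The averaging operator `Q_r f(x) = μ(B_r(x))⁻¹ ∫_{B_r(x)} f dμ`. -/
noncomputable def avgOp {X : Type*} [MetricSpace X] [MeasurableSpace X]
    (μ : Measure X) (r : ℝ) (f : X → ℝ) (x : X) : ℝ :=
  (μ (closedBall x r)).toReal⁻¹ * ∫ y in closedBall x r, f y ∂μ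

/-- The isotropic Markov operator `P^t f(x) = ∫_[0,∞) Q_r f(x) dσ^t(r)`,
where `νt` is the Lebesgue–Stieltjes measure of `σ^t`. -/
noncomputable def isoOp {X : Type*} [MetricSpace X] [MeasurableSpace X]
    (μ : Measure X) (νt : Measure ℝ) (f : X → ℝ) (x : X) : ℝ :=
  ∫ r in Set.Ici (0:ℝ), avgOp μ r f x ∂νt

/-- The heat kernel `p(t,x,y) = ∫_[d(x,y),∞) μ(B_r(x))⁻¹ dσ^t(r)`. -/
noncomputable def heatK {X : Type*} [MetricSpace X] [MeasurableSpace X]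
    (μ : Measure X) (ν : ℝ → Measure ℝ) (t : ℝ) (x y : X) : ℝ≥0∞ :=
  ∫⁻ r in Set.Ici (dist x y), (μ (closedBall x r))⁻¹ ∂(ν t)

/-- The intrinsic ultra-metric `d_*(x,y) = 1/log(1/σ(d(x,y)))` for `x ≠ y`. -/
noncomputable def dstar {X : Type*} [MetricSpace X] (σ : ℝ → ℝ) (x y : X) : ℝ :=
  if x = y then 0 else 1 / Real.log (1 / σ (dist x y))

/-- The closed ball `B*_s(x)` of the intrinsic ultra-metric. -/
def starBall {X : Type*} [MetricSpace X] (σ : ℝ → ℝ) (x : X) (s : ℝ) : Set X :=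
  {y | dstar σ x y ≤ s}

/-- The spectral distribution function `N(x,τ) = 1/μ(B*_{1/τ}(x))`. -/
noncomputable def specN {X : Type*} [MetricSpace X] [MeasurableSpace X]
    (μ : Measure X) (σ : ℝ → ℝ) (x : X) (τ : ℝ) : ℝ≥0∞ :=
  (μ (starBall σ x (1 / τ)))⁻¹

/-- The Green function `g(x,y) = ∫_0^∞ p(t,x,y) dt`. -/
noncomputable def greenF {X : Type*} [MetricSpace X] [MeasurableSpace X]
    (μ : Measure X) (ν : ℝ → Measure ℝ) (x y : X) : ℝ≥0∞ :=
  ∫⁻ t in Set.Ioi (0:ℝ), heatK μ ν t x y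

section auxiliarySection
open Set

section helpers
variable {σ : ℝ → ℝ} {ν : ℝ → Measure ℝ}

lemma sigma_zero (hσmono : StrictMonoOn σ (Set.Ici 0))
    (hσrange : ∀ r : ℝ, 0 ≤ r → σ r ∈ Set.Icc (0:ℝ) 1)
    (hσzero : Tendsto σ (nhdsWithin 0 (Set.Ioi 0)) (nhds 0)) : σ 0 = 0 := by
  have h1 : σ 0 ≤ 0 := by
    refine ge_of_tendsto hσzero ?_
    filter_upwards [self_mem_nhdsWithin] with r (hr : (0:ℝ) < r)
    exact (hσmono (Set.mem_Ici.2 le_rfl) (Set.mem_Ici.2 hr.le) hr).le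
  exact le_antisymm h1 (hσrange 0 le_rfl).1

lemma sigma_lt_one (hσmono : StrictMonoOn σ (Set.Ici 0))
    (hσrange : ∀ r : ℝ, 0 ≤ r → σ r ∈ Set.Icc (0:ℝ) 1) :
    ∀ r : ℝ, 0 ≤ r → σ r < 1 := fun r hr =>
  lt_of_lt_of_le (hσmono hr (by linarith : (0:ℝ) ≤ r + 1) (by linarith))
    (hσrange (r+1) (by linarith)).2

/-- right limit of σ -/
noncomputable def sigP (σ : ℝ → ℝ) (r : ℝ) : ℝ := sInf (σ '' Set.Ioi r)

lemma sigP_bddBelow (hσrange : ∀ r : ℝ, 0 ≤ r → σ r ∈ Set.Icc (0:ℝ) 1) {r : ℝ} (hr : 0 ≤ r) :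
    BddBelow (σ '' Set.Ioi r) := by
  refine ⟨0, fun y hy => ?_⟩
  rcases hy with ⟨b, hb, rfl⟩
  exact (hσrange b (le_of_lt (lt_of_le_of_lt hr hb))).1

lemma sigP_le (hσrange : ∀ r : ℝ, 0 ≤ r → σ r ∈ Set.Icc (0:ℝ) 1)
    {r b : ℝ} (hr : 0 ≤ r) (hb : r < b) : sigP σ r ≤ σ b :=
  csInf_le (sigP_bddBelow hσrange hr) ⟨b, hb, rfl⟩

lemma le_sigP (hσmono : StrictMonoOn σ (Set.Ici 0)) {r : ℝ} (hr : 0 ≤ r) :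
    σ r ≤ sigP σ r := by
  refine le_csInf ⟨σ (r+1), ⟨r+1, by simp [hr], rfl⟩⟩ ?_
  rintro y ⟨b, hb, rfl⟩
  exact hσmono.monotoneOn hr (le_of_lt (lt_of_le_of_lt hr hb)) hb.le

lemma tendsto_sigP (hσmono : StrictMonoOn σ (Set.Ici 0))
    (hσrange : ∀ r : ℝ, 0 ≤ r → σ r ∈ Set.Icc (0:ℝ) 1) {r : ℝ} (hr : 0 ≤ r) :
    Tendsto σ (nhdsWithin r (Set.Ioi r)) (nhds (sigP σ r)) := by
  have hmono : Monotone (fun u : ℝ => σ (max u 0)) := by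
    intro a b hab
    exact hσmono.monotoneOn (le_max_right a 0) (le_max_right b 0)
      (max_le_max hab le_rfl)
  have h := hmono.tendsto_nhdsGT r
  have himg : (fun u : ℝ => σ (max u 0)) '' Set.Ioi r = σ '' Set.Ioi r := by
    apply Set.image_congr
    intro a ha
    rw [max_eq_left (le_of_lt (lt_of_le_of_lt hr ha))]
  rw [himg] at h
  refine h.congr' ?_
  filter_upwards [self_mem_nhdsWithin] with u (hu : r < u)
  rw [max_eq_left (le_of_lt (lt_of_le_of_lt hr hu))]

lemma nu_Ico (hν : ∀ t : ℝ, 0 < t → ∀ a b : ℝ, 0 ≤ a → a ≤ b →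
      ν t (Set.Ico a b) = ENNReal.ofReal (σ b ^ t - σ a ^ t))
    (hσ0 : σ 0 = 0) {t b : ℝ} (ht : 0 < t) (hb : 0 ≤ b) :
    ν t (Set.Ico 0 b) = ENNReal.ofReal (σ b ^ t) := by
  rw [hν t ht 0 b le_rfl hb, hσ0, Real.zero_rpow ht.ne', sub_zero]

lemma nu_Icc_le (hσmono : StrictMonoOn σ (Set.Ici 0))
    (hσrange : ∀ r : ℝ, 0 ≤ r → σ r ∈ Set.Icc (0:ℝ) 1)
    (hν : ∀ t : ℝ, 0 < t → ∀ a b : ℝ, 0 ≤ a → a ≤ b →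
      ν t (Set.Ico a b) = ENNReal.ofReal (σ b ^ t - σ a ^ t))
    (hσ0 : σ 0 = 0) {t ρ : ℝ} (ht : 0 < t) (hρ : 0 ≤ ρ) :
    ν t (Set.Icc 0 ρ) ≤ ENNReal.ofReal (sigP σ ρ ^ t) := by
  have h2 : ContinuousAt (fun y : ℝ => ENNReal.ofReal (y ^ t)) (sigP σ ρ) :=
    ENNReal.continuous_ofReal.continuousAt.comp
      (Real.continuousAt_rpow_const _ _ (Or.inr ht.le))
  have htend : Tendsto (fun b => ENNReal.ofReal (σ b ^ t)) (nhdsWithin ρ (Set.Ioi ρ))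
      (nhds (ENNReal.ofReal (sigP σ ρ ^ t))) :=
    h2.tendsto.comp (tendsto_sigP hσmono hσrange hρ)
  refine ge_of_tendsto htend ?_
  filter_upwards [self_mem_nhdsWithin] with b (hb : ρ < b)
  calc ν t (Set.Icc 0 ρ) ≤ ν t (Set.Ico 0 b) :=
        measure_mono (fun y hy => ⟨hy.1, lt_of_le_of_lt hy.2 hb⟩)
    _ = ENNReal.ofReal (σ b ^ t) := nu_Ico hν hσ0 ht (hρ.trans hb.le)

lemma nu_total (hσrange : ∀ r : ℝ, 0 ≤ r → σ r ∈ Set.Icc (0:ℝ) 1)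
    (hν : ∀ t : ℝ, 0 < t → ∀ a b : ℝ, 0 ≤ a → a ≤ b →
      ν t (Set.Ico a b) = ENNReal.ofReal (σ b ^ t - σ a ^ t))
    (hσ0 : σ 0 = 0) {t : ℝ} (ht : 0 < t) : ν t (Set.Ici 0) ≤ 1 := by
  have hun : Set.Ici (0:ℝ) = ⋃ n : ℕ, Set.Ico (0:ℝ) n := by
    ext r
    simp only [Set.mem_Ici, Set.mem_iUnion, Set.mem_Ico]
    constructor
    · intro hr; obtain ⟨n, hn⟩ := exists_nat_gt r; exact ⟨n, hr, hn⟩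
    · rintro ⟨n, hn, _⟩; exact hn
  have hmono : Monotone (fun n : ℕ => Set.Ico (0:ℝ) n) := fun n m hnm =>
    Set.Ico_subset_Ico_right (by exact_mod_cast hnm)
  rw [hun, Directed.measure_iUnion hmono.directed_le]
  refine iSup_le fun (n : ℕ) => ?_
  rw [nu_Ico hν hσ0 ht (Nat.cast_nonneg n)]
  refine ENNReal.ofReal_le_one.2 (Real.rpow_le_one (hσrange n (Nat.cast_nonneg n)).1
    (hσrange n (Nat.cast_nonneg n)).2 ht.le)

lemma nu_zero_singleton (hν : ∀ t : ℝ, 0 < t → ∀ a b : ℝ, 0 ≤ a → a ≤ b →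
      ν t (Set.Ico a b) = ENNReal.ofReal (σ b ^ t - σ a ^ t))
    (hσ0 : σ 0 = 0)
    (hσzero : Tendsto σ (nhdsWithin 0 (Set.Ioi 0)) (nhds 0)) {t : ℝ} (ht : 0 < t) :
    ν t {(0:ℝ)} = 0 := by
  refine le_antisymm ?_ zero_le
  have h2 : ContinuousAt (fun y : ℝ => ENNReal.ofReal (y ^ t)) 0 :=
    ENNReal.continuous_ofReal.continuousAt.comp
      (Real.continuousAt_rpow_const _ _ (Or.inr ht.le))
  have htend : Tendsto (fun b => ENNReal.ofReal (σ b ^ t)) (nhdsWithin 0 (Set.Ioi 0))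
      (nhds 0) := by
    have := h2.tendsto.comp hσzero
    simpa [Function.comp_def, Real.zero_rpow ht.ne'] using this
  refine ge_of_tendsto htend ?_
  filter_upwards [self_mem_nhdsWithin] with b (hb : (0:ℝ) < b)
  calc ν t {(0:ℝ)} ≤ ν t (Set.Ico 0 b) :=
        measure_mono (by intro y hy; rcases hy with rfl; exact ⟨le_rfl, hb⟩)
    _ = ENNReal.ofReal (σ b ^ t) := nu_Ico hν hσ0 ht hb.le

end helpers

section helpers2
variable {σ : ℝ → ℝ} {ν : ℝ → Measure ℝ}

lemma nuA (hσmono : StrictMonoOn σ (Set.Ici 0))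
    (hσrange : ∀ r : ℝ, 0 ≤ r → σ r ∈ Set.Icc (0:ℝ) 1)
    (hσtop : Tendsto σ atTop (nhds 1))
    (hν : ∀ t : ℝ, 0 < t → ∀ a b : ℝ, 0 ≤ a → a ≤ b →
      ν t (Set.Ico a b) = ENNReal.ofReal (σ b ^ t - σ a ^ t))
    (hσ0 : σ 0 = 0) {t c : ℝ} (ht : 0 < t) (hc0 : 0 ≤ c) (hc1 : c < 1) :
    ν t {r : ℝ | 0 ≤ r ∧ sigP σ r ≤ c} ≤ ENNReal.ofReal (c ^ t) := by
  set S := {r : ℝ | 0 ≤ r ∧ sigP σ r ≤ c} with hSdef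
  rcases Set.eq_empty_or_nonempty S with hS | hS
  · simp [hS]
  obtain ⟨R, hRc, hR0⟩ := ((hσtop.eventually (eventually_gt_nhds hc1)).and
    (eventually_ge_atTop (0:ℝ))).exists
  have hbdd : BddAbove S := by
    refine ⟨R, fun s hs => ?_⟩
    by_contra hcon
    push_neg at hcon
    have h1 : σ R ≤ σ s := hσmono.monotoneOn hR0 (hR0.trans hcon.le) hcon.le
    have h2 : σ s ≤ sigP σ s := le_sigP hσmono hs.1
    linarith [hs.2]
  set ρ := sSup S with hρdef
  obtain ⟨s0, hs0⟩ := hS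
  have hρ0 : 0 ≤ ρ := hs0.1.trans (le_csSup hbdd hs0)
  by_cases hmem : ρ ∈ S
  · calc ν t S ≤ ν t (Set.Icc 0 ρ) :=
          measure_mono (fun s hs => ⟨hs.1, le_csSup hbdd hs⟩)
      _ ≤ ENNReal.ofReal (sigP σ ρ ^ t) := nu_Icc_le hσmono hσrange hν hσ0 ht hρ0
      _ ≤ ENNReal.ofReal (c ^ t) := by
          refine ENNReal.ofReal_le_ofReal (Real.rpow_le_rpow ?_ hmem.2 ht.le)
          exact (hσrange ρ hρ0).1.trans (le_sigP hσmono hρ0)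
  · obtain ⟨u, hu_mono, hu_tend, hu_mem⟩ := exists_seq_tendsto_sSup ⟨s0, hs0⟩ hbdd
    have hsub : S ⊆ ⋃ n, Set.Ico 0 (u n) := by
      intro s hs
      have hlt : s < ρ := lt_of_le_of_ne (le_csSup hbdd hs) (fun h => hmem (h ▸ hs))
      obtain ⟨n, hn⟩ := (hu_tend.eventually (eventually_gt_nhds hlt)).exists
      exact Set.mem_iUnion.2 ⟨n, hs.1, hn⟩
    have hdir : Monotone (fun n : ℕ => Set.Ico (0:ℝ) (u n)) := fun n m hnm =>
      Set.Ico_subset_Ico_right (hu_mono hnm)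
    calc ν t S ≤ ν t (⋃ n, Set.Ico 0 (u n)) := measure_mono hsub
      _ = ⨆ n, ν t (Set.Ico 0 (u n)) := Directed.measure_iUnion hdir.directed_le
      _ ≤ ENNReal.ofReal (c ^ t) := by
          refine iSup_le fun (n : ℕ) => ?_
          rw [nu_Ico hν hσ0 ht (hu_mem n).1]
          refine ENNReal.ofReal_le_ofReal (Real.rpow_le_rpow (hσrange _ (hu_mem n).1).1
            ((le_sigP hσmono (hu_mem n).1).trans (hu_mem n).2) ht.le)

lemma nuB (hσmono : StrictMonoOn σ (Set.Ici 0))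
    (hσrange : ∀ r : ℝ, 0 ≤ r → σ r ∈ Set.Icc (0:ℝ) 1)
    (hσlc : ∀ r : ℝ, 0 < r → ContinuousWithinAt σ (Set.Iic r) r)
    (hσzero : Tendsto σ (nhdsWithin 0 (Set.Ioi 0)) (nhds 0))
    (hσtop : Tendsto σ atTop (nhds 1))
    (hν : ∀ t : ℝ, 0 < t → ∀ a b : ℝ, 0 ≤ a → a ≤ b →
      ν t (Set.Ico a b) = ENNReal.ofReal (σ b ^ t - σ a ^ t))
    (hσ0 : σ 0 = 0) {t c : ℝ} (ht : 0 < t) (hc0 : 0 < c) (hc1 : c < 1) :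
    ∃ ρ : ℝ, 0 < ρ ∧ σ ρ ≤ c ∧ ENNReal.ofReal (c ^ t) ≤ ν t (Set.Icc 0 ρ) := by
  set S := {r : ℝ | 0 ≤ r ∧ σ r ≤ c} with hSdef
  obtain ⟨r₁, hr₁c, hr₁pos⟩ := ((hσzero.eventually (eventually_lt_nhds hc0)).and
    self_mem_nhdsWithin).exists
  have hr₁pos : (0:ℝ) < r₁ := hr₁pos
  have hr₁S : r₁ ∈ S := ⟨hr₁pos.le, hr₁c.le⟩
  have hSne : S.Nonempty := ⟨r₁, hr₁S⟩
  obtain ⟨R, hRc, hR0⟩ := ((hσtop.eventually (eventually_gt_nhds hc1)).and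
    (eventually_ge_atTop (0:ℝ))).exists
  have hbdd : BddAbove S := by
    refine ⟨R, fun s hs => ?_⟩
    by_contra hcon
    push_neg at hcon
    have h1 : σ R ≤ σ s := hσmono.monotoneOn hR0 (hR0.trans hcon.le) hcon.le
    linarith [hs.2]
  set ρ := sSup S with hρdef
  have hρpos : 0 < ρ := lt_of_lt_of_le hr₁pos (le_csSup hbdd hr₁S)
  have hnotS : ∀ a : ℝ, ρ < a → c < σ a := by
    intro a ha
    by_contra hcon
    push_neg at hcon
    exact absurd (le_csSup hbdd ⟨(hρpos.le.trans ha.le), hcon⟩) (not_le.2 ha)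
  have hσρ : σ ρ ≤ c := by
    have htd : Tendsto σ (nhdsWithin ρ (Set.Iio ρ)) (nhds (σ ρ)) :=
      (hσlc ρ hρpos).mono_left (nhdsWithin_mono _ Set.Iio_subset_Iic_self)
    refine le_of_tendsto htd ?_
    filter_upwards [Ioo_mem_nhdsLT_of_mem ⟨hρpos, le_rfl⟩] with r hr
    obtain ⟨s, hsS, hrs⟩ := exists_lt_of_lt_csSup hSne hr.2
    exact le_trans (hσmono.monotoneOn hr.1.le (hr.1.le.trans hrs.le) hrs.le) hsS.2
  refine ⟨ρ, hρpos, hσρ, ?_⟩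
  set b := ρ + 1 with hbdef
  have hρb : ρ < b := by rw [hbdef]; linarith
  have hρ0 : (0:ℝ) ≤ ρ := hρpos.le
  have hcσb : c ≤ σ b := (hnotS b hρb).le
  have hσb0 : 0 ≤ σ b := (hσrange b (by linarith)).1
  have hct : c ^ t ≤ σ b ^ t := Real.rpow_le_rpow hc0.le hcσb ht.le
  have key : ν t (Set.Ioo ρ b) ≤ ENNReal.ofReal (σ b ^ t - c ^ t) := by
    have hcover : Set.Ioo ρ b ⊆ ⋃ n : ℕ, Set.Ico (ρ + 1/(n+1)) b := by
      intro a ha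
      obtain ⟨n, hn⟩ := exists_nat_gt (1/(a-ρ))
      refine Set.mem_iUnion.2 ⟨n, ?_, ha.2⟩
      have haρ : 0 < a - ρ := by linarith [ha.1]
      have hn1 : 1/(a-ρ) < (n:ℝ) + 1 := hn.trans (by linarith)
      have h2 : 1/((n:ℝ)+1) < a - ρ := by
        rw [div_lt_iff₀ (by positivity)]
        rw [div_lt_iff₀ haρ] at hn1
        linarith
      linarith
    have hdir : Monotone (fun n : ℕ => Set.Ico (ρ + 1/((n:ℝ)+1)) b) := by
      intro n m hnm
      refine Set.Ico_subset_Ico_left ?_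
      have hcast : ((n:ℝ)+1) ≤ (m:ℝ)+1 := by
        have := (Nat.cast_le (α := ℝ)).mpr hnm; linarith
      have := one_div_le_one_div_of_le (by positivity : (0:ℝ) < (n:ℝ)+1) hcast
      linarith
    calc ν t (Set.Ioo ρ b) ≤ ν t (⋃ n : ℕ, Set.Ico (ρ + 1/(n+1)) b) := measure_mono hcover
      _ = ⨆ n : ℕ, ν t (Set.Ico (ρ + 1/((n:ℝ)+1)) b) := Directed.measure_iUnion hdir.directed_le
      _ ≤ ENNReal.ofReal (σ b ^ t - c ^ t) := by
          refine iSup_le fun (n : ℕ) => ?_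
          have h1n : (0:ℝ) < 1/((n:ℝ)+1) := by positivity
          have h1n' : 1/((n:ℝ)+1) ≤ 1 := by
            rw [div_le_one (by positivity)]; linarith [Nat.cast_nonneg (α := ℝ) n]
          have ha0 : (0:ℝ) ≤ ρ + 1/((n:ℝ)+1) := by linarith
          have hab : ρ + 1/((n:ℝ)+1) ≤ b := by rw [hbdef]; linarith
          rw [hν t ht _ b ha0 hab]
          refine ENNReal.ofReal_le_ofReal ?_
          have hgt : c < σ (ρ + 1/((n:ℝ)+1)) := hnotS _ (by linarith)
          have := Real.rpow_le_rpow hc0.le hgt.le ht.le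
          linarith
  have hsplit : ν t (Set.Ico 0 b) ≤ ν t (Set.Icc 0 ρ) + ν t (Set.Ioo ρ b) := by
    refine le_trans (measure_mono ?_) (measure_union_le _ _)
    intro y hy
    rcases le_or_gt y ρ with h | h
    · exact Or.inl ⟨hy.1, h⟩
    · exact Or.inr ⟨h, hy.2⟩
  rw [nu_Ico hν hσ0 ht (by linarith : (0:ℝ) ≤ b)] at hsplit
  have hsplit2 : ENNReal.ofReal (σ b ^ t) ≤ ν t (Set.Icc 0 ρ) + ENNReal.ofReal (σ b ^ t - c ^ t) :=
    hsplit.trans (add_le_add_right key _)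
  have hrw : ENNReal.ofReal (c ^ t) =
      ENNReal.ofReal (σ b ^ t) - ENNReal.ofReal (σ b ^ t - c ^ t) := by
    rw [← ENNReal.ofReal_sub _ (by linarith : (0:ℝ) ≤ σ b ^ t - c ^ t)]
    ring_nf
  rw [hrw]
  exact tsub_le_iff_right.2 hsplit2

lemma upper_measurable {A : Set ℝ} (h0 : ∀ a ∈ A, (0:ℝ) ≤ a)
    (hup : ∀ a ∈ A, ∀ b, a ≤ b → b ∈ A) : MeasurableSet A := by
  rcases Set.eq_empty_or_nonempty A with h | h
  · simp [h]
  have hbdd : BddBelow A := ⟨0, fun a ha => h0 a ha⟩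
  by_cases hm : sInf A ∈ A
  · have : A = Set.Ici (sInf A) :=
      Set.Subset.antisymm (fun a ha => csInf_le hbdd ha) (fun b hb => hup _ hm b hb)
    rw [this]; exact measurableSet_Ici
  · have : A = Set.Ioi (sInf A) := by
      ext b
      constructor
      · intro hb
        exact lt_of_le_of_ne (csInf_le hbdd hb) (fun he => hm (he ▸ hb))
      · intro hb
        obtain ⟨a, ha, hab⟩ := exists_lt_of_csInf_lt h hb
        exact hup a ha b hab.le
    rw [this]; exact measurableSet_Ioi

end helpers2

section geom
variable {X : Type*} [MetricSpace X] [MeasurableSpace X] {σ : ℝ → ℝ}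

lemma starBall_eq (hσmono : StrictMonoOn σ (Set.Ici 0))
    (hσrange : ∀ r : ℝ, 0 ≤ r → σ r ∈ Set.Icc (0:ℝ) 1)
    (hσzero : Tendsto σ (nhdsWithin 0 (Set.Ioi 0)) (nhds 0))
    (x : X) {τ : ℝ} (hτ : 0 < τ) :
    starBall σ x (1/τ) = {y : X | σ (dist x y) ≤ Real.exp (-τ)} := by
  have hσ0 := sigma_zero hσmono hσrange hσzero
  ext y
  simp only [starBall, dstar, Set.mem_setOf_eq]
  by_cases hxy : x = y
  · rw [if_pos hxy, ← hxy, dist_self, hσ0]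
    simp only [iff_true_intro (Real.exp_pos (-τ)).le, iff_true]
    positivity
  · rw [if_neg hxy]
    have hd : 0 < dist x y := dist_pos.2 hxy
    have hσd0 : 0 < σ (dist x y) := by
      have := hσmono (Set.mem_Ici.2 (le_refl 0)) (Set.mem_Ici.2 hd.le) hd
      rwa [hσ0] at this
    have hσd1 : σ (dist x y) < 1 := sigma_lt_one hσmono hσrange _ hd.le
    have hlog : 0 < Real.log (1 / σ (dist x y)) :=
      Real.log_pos (one_lt_one_div hσd0 hσd1)
    rw [one_div_le_one_div hlog hτ, one_div, Real.log_inv, le_neg,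
      Real.log_le_iff_le_exp hσd0]

lemma specN_eq (μ : Measure X) (hσmono : StrictMonoOn σ (Set.Ici 0))
    (hσrange : ∀ r : ℝ, 0 ≤ r → σ r ∈ Set.Icc (0:ℝ) 1)
    (hσzero : Tendsto σ (nhdsWithin 0 (Set.Ioi 0)) (nhds 0))
    (x : X) {τ : ℝ} (hτ : 0 < τ) :
    specN μ σ x τ = (μ {y : X | σ (dist x y) ≤ Real.exp (-τ)})⁻¹ := by
  rw [specN, starBall_eq hσmono hσrange hσzero x hτ]

lemma cb_subset (hσmono : StrictMonoOn σ (Set.Ici 0)) (x : X) {r s : ℝ}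
    (hr : 0 ≤ r) (h : σ r ≤ s) :
    closedBall x r ⊆ {y : X | σ (dist x y) ≤ s} := by
  intro y hy
  rw [mem_closedBall, dist_comm] at hy
  exact le_trans (hσmono.monotoneOn dist_nonneg hr hy) h

lemma subset_cb (hσrange : ∀ r : ℝ, 0 ≤ r → σ r ∈ Set.Icc (0:ℝ) 1) (x : X) {r s : ℝ}
    (hr : 0 ≤ r) (h : s < sigP σ r) :
    {y : X | σ (dist x y) ≤ s} ⊆ closedBall x r := by
  intro y hy
  rw [mem_closedBall, dist_comm]
  by_contra hcon
  push_neg at hcon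
  have h2 := sigP_le hσrange hr hcon
  have h3 : σ (dist x y) ≤ s := hy
  linarith

end geom

section analytic

lemma sigP_mono {σ : ℝ → ℝ} (hσrange : ∀ r : ℝ, 0 ≤ r → σ r ∈ Set.Icc (0:ℝ) 1)
    {a b : ℝ} (ha : 0 ≤ a) (hab : a ≤ b) : sigP σ a ≤ sigP σ b := by
  refine le_csInf ⟨σ (b+1), ⟨b+1, by simp, rfl⟩⟩ ?_
  rintro y ⟨v, hv, rfl⟩
  exact sigP_le hσrange ha (lt_of_le_of_lt hab hv)

lemma exp_two_pow_tendsto {τ : ℝ} (hτ : 0 < τ) :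
    Tendsto (fun k : ℕ => Real.exp (-((2:ℝ)^k * τ))) atTop (nhds 0) := by
  have h2 : Tendsto (fun k : ℕ => ((2:ℝ)^k)) atTop atTop :=
    tendsto_pow_atTop_atTop_of_one_lt one_lt_two
  have h3 : Tendsto (fun k : ℕ => ((2:ℝ)^k * τ)) atTop atTop :=
    h2.atTop_mul_const hτ
  exact Real.tendsto_exp_atBot.comp (tendsto_neg_atBot_iff.2 h3)

lemma sum_aux {D : ℝ} (hD : 1 ≤ D) :
    Summable (fun k : ℕ => D^(k+1) * Real.exp (-(2:ℝ)^k)) := by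
  have htend : Tendsto (fun k : ℕ => D * Real.exp (-((2:ℝ)^k * 1))) atTop (nhds 0) := by
    simpa using (exp_two_pow_tendsto one_pos).const_mul D
  refine summable_of_ratio_norm_eventually_le (r := 1/2) (by norm_num) ?_
  filter_upwards [htend.eventually (eventually_le_nhds (by norm_num : (0:ℝ) < 1/2))] with k hk
  have hk' : D * Real.exp (-(2:ℝ)^k) ≤ 1/2 := by simpa using hk
  have hsplit : D^(k+1+1) * Real.exp (-(2:ℝ)^(k+1)) =
      (D * Real.exp (-(2:ℝ)^k)) * (D^(k+1) * Real.exp (-(2:ℝ)^k)) := by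
    rw [show -(2:ℝ)^(k+1) = -(2:ℝ)^k + -(2:ℝ)^k by ring, Real.exp_add]
    ring
  rw [Real.norm_of_nonneg (by positivity), Real.norm_of_nonneg (by positivity), hsplit]
  exact mul_le_mul_of_nonneg_right hk' (by positivity)

end analytic


end auxiliarySection

set_option maxHeartbeats 1000000 in
theorem statement_10
    {X : Type*} [MetricSpace X] [TopologicalSpace.SeparableSpace X]
    [MeasurableSpace X] [BorelSpace X]
    (hd : ∀ x y z : X, dist x z ≤ max (dist x y) (dist y z))
    (hcb : ∀ (x : X) (r : ℝ), IsCompact (closedBall x r))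
    (μ : Measure X)
    (hμpos : ∀ (x : X) (r : ℝ), 0 < r → 0 < μ (closedBall x r))
    (hμfin : ∀ (x : X) (r : ℝ), 0 < r → μ (closedBall x r) < ⊤)
    (σ : ℝ → ℝ)
    (hσmono : StrictMonoOn σ (Set.Ici 0))
    (hσrange : ∀ r : ℝ, 0 ≤ r → σ r ∈ Set.Icc (0:ℝ) 1)
    (hσlc : ∀ r : ℝ, 0 < r → ContinuousWithinAt σ (Set.Iic r) r)
    (hσzero : Tendsto σ (nhdsWithin 0 (Set.Ioi 0)) (nhds 0))
    (hσtop : Tendsto σ atTop (nhds 1))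
    (ν : ℝ → Measure ℝ)
    (hν : ∀ t : ℝ, 0 < t → ∀ a b : ℝ, 0 ≤ a → a ≤ b →
      ν t (Set.Ico a b) = ENNReal.ofReal (σ b ^ t - σ a ^ t))
    (hνneg : ∀ t : ℝ, 0 < t → ν t (Set.Iio 0) = 0)
    (x : X) :
    (∃ C : ℝ, 0 < C ∧ ∀ t : ℝ, 0 < t →
        heatK μ ν t x x ≤ ENNReal.ofReal C * specN μ σ x (1 / t)) ↔
    (∃ D : ℝ, 0 < D ∧ ∀ τ : ℝ, 0 < τ →
        specN μ σ x (2 * τ) ≤ ENNReal.ofReal D * specN μ σ x τ) := by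
  have hσ0 : σ 0 = 0 := sigma_zero hσmono hσrange hσzero
  constructor
  · -- (i) → (ii)
    rintro ⟨C, hC, hheat⟩
    refine ⟨Real.exp 2 * C, by positivity, ?_⟩
    intro τ hτ
    set t := 1/τ with htdef
    have ht : 0 < t := by positivity
    have ht' : 1/t = τ := one_div_one_div τ
    set c := Real.exp (-(2*τ)) with hcdef
    have hc0 : 0 < c := Real.exp_pos _
    have hc1 : c < 1 := Real.exp_lt_one_iff.2 (by linarith)
    obtain ⟨ρ, hρpos, hσρ, hmeas⟩ := nuB hσmono hσrange hσlc hσzero hσtop hν hσ0 ht hc0 hc1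
    have hct : c ^ t = Real.exp (-2) := by
      rw [hcdef, ← Real.exp_mul, htdef]
      congr 1
      field_simp
    have hKlow : ENNReal.ofReal (Real.exp (-2)) * specN μ σ x (2*τ) ≤ heatK μ ν t x x := by
      simp only [heatK, dist_self]
      calc ENNReal.ofReal (Real.exp (-2)) * specN μ σ x (2*τ)
          ≤ ν t (Set.Icc 0 ρ) * specN μ σ x (2*τ) := by
            rw [← hct]; exact mul_le_mul_left hmeas _
        _ = ∫⁻ _ in Set.Icc 0 ρ, specN μ σ x (2*τ) ∂(ν t) := by
            rw [setLIntegral_const, mul_comm]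
        _ ≤ ∫⁻ r in Set.Icc 0 ρ, (μ (closedBall x r))⁻¹ ∂(ν t) := by
            refine lintegral_mono_ae ((ae_restrict_iff' measurableSet_Icc).2 (ae_of_all _ ?_))
            intro r hr
            rw [specN_eq μ hσmono hσrange hσzero x (by positivity : (0:ℝ) < 2*τ)]
            refine ENNReal.inv_le_inv.2 (measure_mono ?_)
            have hσr : σ r ≤ c :=
              le_trans (hσmono.monotoneOn hr.1 (hr.1.trans hr.2) hr.2) hσρ
            exact cb_subset hσmono x hr.1 hσr
        _ ≤ ∫⁻ r in Set.Ici 0, (μ (closedBall x r))⁻¹ ∂(ν t) :=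
            lintegral_mono_set Set.Icc_subset_Ici_self
    have hcomb : ENNReal.ofReal (Real.exp (-2)) * specN μ σ x (2*τ) ≤
        ENNReal.ofReal C * specN μ σ x τ := by
      refine hKlow.trans ((hheat t ht).trans_eq ?_)
      rw [ht']
    have hne : ENNReal.ofReal (Real.exp (-2)) ≠ 0 :=
      (ENNReal.ofReal_pos.2 (Real.exp_pos _)).ne'
    have hnt : ENNReal.ofReal (Real.exp (-2)) ≠ ⊤ := ENNReal.ofReal_ne_top
    calc specN μ σ x (2*τ)
        = (ENNReal.ofReal (Real.exp (-2)))⁻¹ *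
          (ENNReal.ofReal (Real.exp (-2)) * specN μ σ x (2*τ)) := by
          rw [← mul_assoc, ENNReal.inv_mul_cancel hne hnt, one_mul]
      _ ≤ (ENNReal.ofReal (Real.exp (-2)))⁻¹ * (ENNReal.ofReal C * specN μ σ x τ) :=
          mul_le_mul_right hcomb _
      _ = ENNReal.ofReal (Real.exp 2 * C) * specN μ σ x τ := by
          rw [← ENNReal.ofReal_inv_of_pos (Real.exp_pos _), ← mul_assoc,
            ← ENNReal.ofReal_mul (by positivity)]
          congr 2
          rw [Real.exp_neg, inv_inv]
  · -- (ii) → (i)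
    rintro ⟨D₀, hD₀, hdb⟩
    set D := max D₀ 1 with hDdef
    have hD1 : (1:ℝ) ≤ D := le_max_right _ _
    have hD0 : (0:ℝ) ≤ D := by linarith
    have hdb' : ∀ τ : ℝ, 0 < τ → specN μ σ x (2*τ) ≤ ENNReal.ofReal D * specN μ σ x τ :=
      fun τ hτ => (hdb τ hτ).trans
        (mul_le_mul_left (ENNReal.ofReal_le_ofReal (le_max_left _ _)) _)
    have hiter : ∀ k : ℕ, ∀ τ : ℝ, 0 < τ →
        specN μ σ x (2^k * τ) ≤ ENNReal.ofReal D ^ k * specN μ σ x τ := by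
      intro k
      induction k with
      | zero => intro τ hτ; simp
      | succ k ih =>
        intro τ hτ
        have h2 : (2:ℝ)^(k+1) * τ = 2 * (2^k * τ) := by ring
        rw [h2]
        calc specN μ σ x (2 * (2^k*τ)) ≤ ENNReal.ofReal D * specN μ σ x (2^k*τ) :=
              hdb' _ (by positivity)
          _ ≤ ENNReal.ofReal D * (ENNReal.ofReal D ^ k * specN μ σ x τ) :=
              mul_le_mul_right (ih τ hτ) _
          _ = ENNReal.ofReal D ^ (k+1) * specN μ σ x τ := by
              rw [pow_succ]; ring
    set E := ∑' k : ℕ, D^(k+1) * Real.exp (-(2:ℝ)^k) with hEdef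
    have hE0 : 0 ≤ E := tsum_nonneg (fun k => by positivity)
    refine ⟨1 + E, by linarith, ?_⟩
    intro t ht
    set τ := 1/t with hτdef
    have hτ : 0 < τ := by positivity
    have hτt : τ * t = 1 := one_div_mul_cancel ht.ne'
    set N := specN μ σ x τ with hNdef
    set f : ℝ → ℝ≥0∞ := fun r => (μ (closedBall x r))⁻¹ with hfdef
    set G : ℕ → Set ℝ := fun k => {r : ℝ | 0 ≤ r ∧ Real.exp (-((2:ℝ)^k * τ)) < sigP σ r}
      with hGdef
    have hGup : ∀ k : ℕ, ∀ a ∈ G k, ∀ b, a ≤ b → b ∈ G k := by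
      intro k a ha b hab
      exact ⟨ha.1.trans hab, lt_of_lt_of_le ha.2 (sigP_mono hσrange ha.1 hab)⟩
    have hGmeas : ∀ k, MeasurableSet (G k) :=
      fun k => upper_measurable (fun a ha => ha.1) (hGup k)
    have hGmono : ∀ k, G k ⊆ G (k+1) := by
      intro k r hr
      refine ⟨hr.1, lt_of_le_of_lt ?_ hr.2⟩
      refine Real.exp_le_exp.2 ?_
      have : (2:ℝ)^k ≤ 2^(k+1) := by
        refine pow_le_pow_right₀ (by norm_num) (by omega)
      nlinarith
    set T : ℕ → Set ℝ := fun k => match k with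
      | 0 => G 0
      | (j+1) => G (j+1) \ G j
      with hTdef
    have hTsubG : ∀ k, T k ⊆ G k := by
      intro k
      match k with
      | 0 => exact fun r hr => hr
      | (j+1) => exact fun r hr => hr.1
    have hTmeas : ∀ k, MeasurableSet (T k) := by
      intro k
      match k with
      | 0 => exact hGmeas 0
      | (j+1) => exact (hGmeas (j+1)).diff (hGmeas j)
    have hcover : Set.Ici (0:ℝ) ⊆ {0} ∪ ⋃ k, T k := by
      intro r hr
      rcases eq_or_lt_of_le (Set.mem_Ici.1 hr) with hr0 | hr'
      · exact Or.inl (by simp [← hr0])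
      · refine Or.inr ?_
        have hσr : 0 < σ r := by
          have := hσmono (Set.mem_Ici.2 le_rfl) (Set.mem_Ici.2 hr'.le) hr'
          rwa [hσ0] at this
        have hσpr : 0 < sigP σ r := lt_of_lt_of_le hσr (le_sigP hσmono hr'.le)
        have hrG : ∃ k, r ∈ G k := by
          obtain ⟨k, hk⟩ := ((exp_two_pow_tendsto hτ).eventually
            (eventually_lt_nhds hσpr)).exists
          exact ⟨k, hr'.le, hk⟩
        have hfind := Nat.find_spec hrG
        refine Set.mem_iUnion.2 ⟨Nat.find hrG, ?_⟩
        match hkf : Nat.find hrG with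
        | 0 => rw [hkf] at hfind; exact hfind
        | (j+1) =>
          rw [hkf] at hfind
          exact ⟨hfind, Nat.find_min hrG (by omega : j < Nat.find hrG)⟩
    have hbound : ∀ k : ℕ, ∀ r ∈ G k, f r ≤ ENNReal.ofReal D ^ k * N := by
      intro k r hr
      have hpos : (0:ℝ) < 2^k * τ := by positivity
      calc f r ≤ specN μ σ x (2^k * τ) := by
            rw [specN_eq μ hσmono hσrange hσzero x hpos]
            exact ENNReal.inv_le_inv.2 (measure_mono (subset_cb hσrange x hr.1 hr.2))
        _ ≤ ENNReal.ofReal D ^ k * N := hiter k τ hτ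
    have hest : ∀ k : ℕ, ∫⁻ r in T k, f r ∂(ν t) ≤
        (ENNReal.ofReal D ^ k * N) * ν t (T k) := by
      intro k
      calc ∫⁻ r in T k, f r ∂(ν t)
          ≤ ∫⁻ _ in T k, (ENNReal.ofReal D ^ k * N) ∂(ν t) := by
            refine lintegral_mono_ae ((ae_restrict_iff' (hTmeas k)).2 (ae_of_all _ ?_))
            exact fun r hr => hbound k r (hTsubG k hr)
        _ = (ENNReal.ofReal D ^ k * N) * ν t (T k) := setLIntegral_const _ _
    have hmass : ∀ k : ℕ, ν t (T (k+1)) ≤ ENNReal.ofReal (Real.exp (-(2:ℝ)^k)) := by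
      intro k
      have hsub : T (k+1) ⊆ {r : ℝ | 0 ≤ r ∧ sigP σ r ≤ Real.exp (-((2:ℝ)^k * τ))} := by
        rintro r ⟨hr1, hr2⟩
        exact ⟨hr1.1, not_lt.1 (fun hcon => hr2 ⟨hr1.1, hcon⟩)⟩
      have hlt1 : Real.exp (-((2:ℝ)^k * τ)) < 1 :=
        Real.exp_lt_one_iff.2 (neg_lt_zero.mpr (by positivity))
      calc ν t (T (k+1)) ≤ ν t {r : ℝ | 0 ≤ r ∧ sigP σ r ≤ Real.exp (-((2:ℝ)^k * τ))} :=
            measure_mono hsub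
        _ ≤ ENNReal.ofReal (Real.exp (-((2:ℝ)^k * τ)) ^ t) :=
            nuA hσmono hσrange hσtop hν hσ0 ht (Real.exp_pos _).le hlt1
        _ = ENNReal.ofReal (Real.exp (-(2:ℝ)^k)) := by
            rw [← Real.exp_mul]
            congr 2
            rw [show (-((2:ℝ)^k * τ)) * t = -((2:ℝ)^k * (τ * t)) by ring, hτt, mul_one]
    have hT0 : ν t (T 0) ≤ 1 := by
      refine le_trans (measure_mono ?_) (nu_total hσrange hν hσ0 ht)
      exact fun r hr => hr.1
    set g : ℕ → ℝ≥0∞ := fun k => Nat.casesOn k N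
      (fun j => ENNReal.ofReal (D^(j+1) * Real.exp (-(2:ℝ)^j)) * N) with hgdef
    have hg0 : g 0 = N := rfl
    have hgs : ∀ j : ℕ, g (j+1) = ENNReal.ofReal (D^(j+1) * Real.exp (-(2:ℝ)^j)) * N :=
      fun j => rfl
    have hTg : ∀ k : ℕ, ∫⁻ r in T k, f r ∂(ν t) ≤ g k := by
      intro k
      cases k with
      | zero =>
        refine (hest 0).trans ?_
        rw [hg0]
        simpa using mul_le_mul_right hT0 N
      | succ j =>
        refine (hest (j+1)).trans ?_
        rw [hgs j]
        calc (ENNReal.ofReal D ^ (j+1) * N) * ν t (T (j+1))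
            ≤ (ENNReal.ofReal D ^ (j+1) * N) * ENNReal.ofReal (Real.exp (-(2:ℝ)^j)) :=
              mul_le_mul_right (hmass j) _
          _ = ENNReal.ofReal (D^(j+1) * Real.exp (-(2:ℝ)^j)) * N := by
              rw [← ENNReal.ofReal_pow hD0, ENNReal.ofReal_mul (by positivity)]
              ring
    have hgsum : ∑' k, g k = ENNReal.ofReal (1 + E) * N := by
      rw [tsum_eq_zero_add' ENNReal.summable, hg0]
      have : ∑' j : ℕ, g (j+1) = ENNReal.ofReal E * N := by
        simp only [hgs]
        rw [ENNReal.tsum_mul_right, hEdef,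
          ENNReal.ofReal_tsum_of_nonneg (fun k => by positivity) (sum_aux hD1)]
      rw [this, ENNReal.ofReal_add (by norm_num) hE0, ENNReal.ofReal_one, add_mul, one_mul]
    have hmain : heatK μ ν t x x ≤ ENNReal.ofReal (1 + E) * N := by
      calc heatK μ ν t x x = ∫⁻ r in Set.Ici (0:ℝ), f r ∂(ν t) := by
            simp only [heatK, dist_self, hfdef]
        _ ≤ ∫⁻ r in ({0} ∪ ⋃ k, T k : Set ℝ), f r ∂(ν t) := lintegral_mono_set hcover
        _ ≤ (∫⁻ r in ({0} : Set ℝ), f r ∂(ν t)) + ∫⁻ r in (⋃ k, T k), f r ∂(ν t) :=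
            lintegral_union_le _ _ _
        _ = ∫⁻ r in (⋃ k, T k), f r ∂(ν t) := by
            rw [Measure.restrict_eq_zero.2 (nu_zero_singleton hν hσ0 hσzero ht),
              lintegral_zero_measure, zero_add]
        _ ≤ ∑' k, ∫⁻ r in T k, f r ∂(ν t) := lintegral_iUnion_le _ _
        _ ≤ ∑' k, g k := ENNReal.tsum_le_tsum hTg
        _ = ENNReal.ofReal (1 + E) * N := hgsum
    exact hmain.trans_eq (by rw [hNdef])
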